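/- Let G be a connected simple graph of order n ≥ 4 whose complement Ḡ is also connected. Then n−7 ≤ rvd(G) + rvd(Ḡ) ≤ 2n. -/

import Mathlib

open SimpleGraph Finset

/-- The graph obtained from `G` by removing (isolating) the vertices of `S`.
Since in our uses the endpoints of interest never lie in `S`, reachability
between them in this graph agrees with reachability in `G - S`. -/
def SimpleGraph.delVerts {V : Type*} (G : SimpleGraph V) (S : Set V) : SimpleGraph V where
  Adj u v := G.Adj u v ∧ u ∉ S ∧ v ∉ S
  symm := ⟨fun u v h => ⟨h.1.symm, h.2.2, h.2.1⟩⟩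
  loopless := ⟨fun v h => G.loopless.irrefl v h.1⟩

/-- `c` is a rainbow vertex-disconnection coloring of `G`: every two distinct
vertices `x, y` admit an `x`-`y` rainbow vertex-cut. -/
def SimpleGraph.IsRVDColoring {V α : Type*} (G : SimpleGraph V) (c : V → α) : Prop :=
  ∀ x y : V, x ≠ y → ∃ S : Set V, x ∉ S ∧ y ∉ S ∧
    (¬ G.Adj x y → ¬ (G.delVerts S).Reachable x y ∧ Set.InjOn c S) ∧
    (G.Adj x y → ¬ ((G.deleteEdges {s(x, y)}).delVerts S).Reachable x y ∧
      (Set.InjOn c (S ∪ {x}) ∨ Set.InjOn c (S ∪ {y})))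

/-- The rainbow vertex-disconnection number of `G`: the minimum number of colors
in a rainbow vertex-disconnection coloring of `G`. -/
noncomputable def SimpleGraph.rvd {V : Type*} (G : SimpleGraph V) : ℕ :=
  sInf {k | ∃ c : V → Fin k, G.IsRVDColoring c}

section RVDAux

variable {V : Type*} {k k' : ℕ}

/-- An injective coloring is a rainbow vertex-disconnection coloring. -/
lemma injective_isRVDColoring {α : Type*} (G : SimpleGraph V) (c : V → α)
    (hc : Function.Injective c) : G.IsRVDColoring c := by
  intro x y hxy
  refine ⟨{z | z ≠ x ∧ z ≠ y}, by simp, by simp [hxy.symm], ?_, ?_⟩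
  · intro hadj
    refine ⟨?_, fun a _ b _ h => hc h⟩
    rintro ⟨w⟩
    cases w with
    | nil => exact hxy rfl
    | cons h p =>
      rename_i v
      obtain ⟨h1, -, h3⟩ := h
      simp only [Set.mem_setOf_eq, not_and_or, not_not] at h3
      rcases h3 with rfl | rfl
      · exact G.loopless.irrefl _ h1
      · exact hadj h1
  · intro hadj
    refine ⟨?_, Or.inl fun a _ b _ h => hc h⟩
    rintro ⟨w⟩
    cases w with
    | nil => exact hxy rfl
    | cons h p =>
      rename_i v
      obtain ⟨h1, -, h3⟩ := h
      rw [deleteEdges_adj] at h1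
      simp only [Set.mem_setOf_eq, not_and_or, not_not] at h3
      rcases h3 with rfl | rfl
      · exact G.loopless.irrefl _ h1.1
      · exact h1.2 (by simp)

lemma rvd_le_card [Fintype V] (G : SimpleGraph V) :
    G.rvd ≤ Fintype.card V :=
  Nat.sInf_le ⟨fun v => (Fintype.equivFin V) v,
    injective_isRVDColoring G _ (Equiv.injective _)⟩

lemma rvd_mem [Fintype V] (G : SimpleGraph V) :
    ∃ c : V → Fin G.rvd, G.IsRVDColoring c := by
  have h : {k | ∃ c : V → Fin k, G.IsRVDColoring c}.Nonempty :=
    ⟨Fintype.card V, ⟨fun v => (Fintype.equivFin V) v,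
      injective_isRVDColoring G _ (Equiv.injective _)⟩⟩
  exact Nat.sInf_mem h

/-- Key extraction: for any pair `u ≠ v` there is a rainbow set `S` avoiding `u, v`,
containing every common neighbor of `u` and `v`, such that moreover in the adjacent
case one of `S ∪ {u}`, `S ∪ {v}` is rainbow. -/
lemma exists_cut {G : SimpleGraph V} {c : V → Fin k} (hc : G.IsRVDColoring c)
    {u v : V} (huv : u ≠ v) :
    ∃ S : Set V, u ∉ S ∧ v ∉ S ∧ Set.InjOn c S ∧
      (G.Adj u v → Set.InjOn c (S ∪ {u}) ∨ Set.InjOn c (S ∪ {v})) ∧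
      (∀ z, G.Adj u z → G.Adj v z → z ∈ S) := by
  obtain ⟨S, hu, hv, hna, ha⟩ := hc u v huv
  by_cases hadj : G.Adj u v
  · obtain ⟨hreach, hinj⟩ := ha hadj
    refine ⟨S, hu, hv, ?_, fun _ => hinj, ?_⟩
    · rcases hinj with h | h
      · exact h.mono Set.subset_union_left
      · exact h.mono Set.subset_union_left
    · intro z hz1 hz2
      by_contra hzS
      apply hreach
      have e1 : (G.deleteEdges {s(u, v)}).Adj u z := by
        rw [deleteEdges_adj]
        refine ⟨hz1, ?_⟩
        simp only [Set.mem_singleton_iff, Sym2.eq_iff]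
        rintro (⟨-, rfl⟩ | ⟨rfl, rfl⟩)
        · exact G.loopless.irrefl _ hz2
        · exact G.loopless.irrefl _ hz1
      have e2 : (G.deleteEdges {s(u, v)}).Adj z v := by
        rw [deleteEdges_adj]
        refine ⟨hz2.symm, ?_⟩
        simp only [Set.mem_singleton_iff, Sym2.eq_iff]
        rintro (⟨rfl, -⟩ | ⟨rfl, rfl⟩)
        · exact G.loopless.irrefl _ hz1
        · exact G.loopless.irrefl _ hz1
      have f1 : ((G.deleteEdges {s(u, v)}).delVerts S).Adj u z := ⟨e1, hu, hzS⟩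
      have f2 : ((G.deleteEdges {s(u, v)}).delVerts S).Adj z v := ⟨e2, hzS, hv⟩
      exact (Adj.reachable f1).trans (Adj.reachable f2)
  · obtain ⟨hreach, hinj⟩ := hna hadj
    refine ⟨S, hu, hv, hinj, fun h => absurd h hadj, ?_⟩
    intro z hz1 hz2
    by_contra hzS
    have e1 : (G.delVerts S).Adj u z := ⟨hz1, hu, hzS⟩
    have e2 : (G.delVerts S).Adj z v := ⟨hz2.symm, hzS, hv⟩
    exact hreach ((Adj.reachable e1).trans (Adj.reachable e2))

variable [Fintype V] [DecidableEq V]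

omit [Fintype V] [DecidableEq V] in
lemma card_le_of_injOn {c : V → Fin k} {T : Finset V} {S : Set V} (hTS : ↑T ⊆ S)
    (h : Set.InjOn c S) : T.card ≤ k := by
  classical
  calc T.card = (T.image c).card := (Finset.card_image_of_injOn (h.mono hTS)).symm
    _ ≤ Fintype.card (Fin k) := by simpa using Finset.card_le_univ (T.image c)
    _ = k := Fintype.card_fin k

variable {G : SimpleGraph V} [DecidableRel G.Adj] {c : V → Fin k}

lemma common_card_le (hc : G.IsRVDColoring c) {u v : V} (huv : u ≠ v) :
    (G.neighborFinset u ∩ G.neighborFinset v).card ≤ k := by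
  obtain ⟨S, hu, hv, hinj, -, hmem⟩ := exists_cut hc huv
  apply card_le_of_injOn (S := S) ?_ hinj
  intro z hz
  simp only [coe_inter, Set.mem_inter_iff, mem_coe, mem_neighborFinset] at hz
  exact hmem z hz.1 hz.2

lemma common_card_succ_le (hc : G.IsRVDColoring c) {u v : V} (hadj : G.Adj u v) :
    (G.neighborFinset u ∩ G.neighborFinset v).card + 1 ≤ k := by
  obtain ⟨S, hu, hv, hinj, hrain, hmem⟩ := exists_cut hc hadj.ne
  have hsub : ↑(G.neighborFinset u ∩ G.neighborFinset v) ⊆ S := by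
    intro z hz
    simp only [coe_inter, Set.mem_inter_iff, mem_coe, mem_neighborFinset] at hz
    exact hmem z hz.1 hz.2
  rcases hrain hadj with h | h
  · have : (insert u (G.neighborFinset u ∩ G.neighborFinset v)).card ≤ k := by
      apply card_le_of_injOn ?_ h
      rw [coe_insert]
      exact Set.insert_subset (by simp) (hsub.trans Set.subset_union_left)
    rw [Finset.card_insert_of_notMem (by simp)] at this
    omega
  · have : (insert v (G.neighborFinset u ∩ G.neighborFinset v)).card ≤ k := by
      apply card_le_of_injOn ?_ h
      rw [coe_insert]
      exact Set.insert_subset (by simp) (hsub.trans Set.subset_union_left)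
    rw [Finset.card_insert_of_notMem (by simp)] at this
    omega

/-- Two vertices of the same color have at most one common neighbor. -/
lemma mono_common_card_le (hc : G.IsRVDColoring c) {u v : V} (huv : u ≠ v)
    (hcc : c u = c v) :
    (G.neighborFinset u ∩ G.neighborFinset v).card ≤ 1 := by
  by_contra h
  push_neg at h
  rw [Nat.lt_iff_add_one_le, Nat.add_comm, ← Nat.lt_iff_add_one_le, Finset.one_lt_card] at h
  obtain ⟨z₁, hz₁, z₂, hz₂, hzz⟩ := h
  simp only [mem_inter, mem_neighborFinset] at hz₁ hz₂
  obtain ⟨S, -, -, hinj, -, hmem⟩ := exists_cut hc hzz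
  exact huv (hinj (hmem u hz₁.1.symm hz₂.1.symm) (hmem v hz₁.2.symm hz₂.2.symm) hcc)

end RVDAux

section Counting

variable {V : Type*} [Fintype V] [DecidableEq V] {k k' : ℕ}

/-- Double counting: the sum of sizes of common neighborhoods over ordered pairs of
distinct vertices equals the number of "cherries". -/
lemma sum_common_eq (G : SimpleGraph V) [DecidableRel G.Adj] :
    ∑ p ∈ (univ : Finset V).offDiag, (G.neighborFinset p.1 ∩ G.neighborFinset p.2).card
      = ∑ z : V, (G.neighborFinset z).offDiag.card := by
  have h1 : ∀ p : V × V,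
      (G.neighborFinset p.1 ∩ G.neighborFinset p.2).card
        = ∑ z : V, if z ∈ G.neighborFinset p.1 ∩ G.neighborFinset p.2 then 1 else 0 := by
    intro p
    rw [Finset.sum_ite_mem]
    simp
  calc ∑ p ∈ (univ : Finset V).offDiag, (G.neighborFinset p.1 ∩ G.neighborFinset p.2).card
      = ∑ p ∈ (univ : Finset V).offDiag, ∑ z : V,
          if z ∈ G.neighborFinset p.1 ∩ G.neighborFinset p.2 then 1 else 0 :=
        Finset.sum_congr rfl fun p _ => h1 p
    _ = ∑ z : V, ∑ p ∈ (univ : Finset V).offDiag,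
          if z ∈ G.neighborFinset p.1 ∩ G.neighborFinset p.2 then 1 else 0 :=
        Finset.sum_comm
    _ = ∑ z : V, (G.neighborFinset z).offDiag.card := by
        refine Finset.sum_congr rfl fun z _ => ?_
        rw [Finset.sum_boole, Nat.cast_id]
        congr 1
        ext p
        simp only [Finset.mem_filter, Finset.mem_offDiag, Finset.mem_univ, true_and,
          Finset.mem_inter, mem_neighborFinset]
        constructor
        · rintro ⟨hne, h1, h2⟩
          exact ⟨h1.symm, h2.symm, hne⟩
        · rintro ⟨h1, h2, hne⟩
          exact ⟨hne, h1.symm, h2.symm⟩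

lemma key_z (G : SimpleGraph V) [DecidableRel G.Adj] [DecidableRel Gᶜ.Adj]
    (hn : 3 ≤ Fintype.card V) (z : V) :
    (Fintype.card V - 1) * (Fintype.card V - 3) ≤
      2 * ((G.neighborFinset z).offDiag.card + (Gᶜ.neighborFinset z).offDiag.card) := by
  have hd : Gᶜ.degree z = Fintype.card V - 1 - G.degree z := G.degree_compl z
  have hlt : G.degree z < Fintype.card V := G.degree_lt_card_verts z
  rw [Finset.offDiag_card, Finset.offDiag_card]
  show (Fintype.card V - 1) * (Fintype.card V - 3) ≤
    2 * ((G.degree z) * (G.degree z) - G.degree z +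
         ((Gᶜ.degree z) * (Gᶜ.degree z) - Gᶜ.degree z))
  set n := Fintype.card V
  set d := G.degree z
  set e := Gᶜ.degree z
  have hde : d + e = n - 1 := by omega
  have h1 : d ≤ d * d := by
    rcases Nat.eq_zero_or_pos d with h | h
    · simp [h]
    · exact Nat.le_mul_of_pos_left d h
  have h2 : e ≤ e * e := by
    rcases Nat.eq_zero_or_pos e with h | h
    · simp [h]
    · exact Nat.le_mul_of_pos_left e h
  have hn1 : 1 ≤ n := by omega
  have hn3 : 3 ≤ n := hn
  zify [h1, h2, hn1, hn3]
  have hde' : (d : ℤ) + e = (n : ℤ) - 1 := by omega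
  nlinarith [sq_nonneg ((d : ℤ) - e)]

variable {G : SimpleGraph V} [DecidableRel G.Adj] [DecidableRel Gᶜ.Adj]
  {c : V → Fin k} {c' : V → Fin k'}

lemma pair_bound (hc : G.IsRVDColoring c) (hc' : Gᶜ.IsRVDColoring c')
    {u v : V} (huv : u ≠ v) :
    (G.neighborFinset u ∩ G.neighborFinset v).card +
      (Gᶜ.neighborFinset u ∩ Gᶜ.neighborFinset v).card + 1 ≤ k + k' := by
  by_cases hadj : G.Adj u v
  · have h1 := common_card_succ_le hc hadj
    have h2 := common_card_le hc' huv
    omega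
  · have hadj' : Gᶜ.Adj u v := ⟨huv, hadj⟩
    have h1 := common_card_le hc huv
    have h2 := common_card_succ_le hc' hadj'
    omega

/-- Lower bound for the total common-neighborhood count. -/
lemma count_low (G : SimpleGraph V) [DecidableRel G.Adj] [DecidableRel Gᶜ.Adj]
    (hn : 3 ≤ Fintype.card V) :
    Fintype.card V * ((Fintype.card V - 1) * (Fintype.card V - 3)) ≤
      2 * ((∑ p ∈ (univ : Finset V).offDiag,
              (G.neighborFinset p.1 ∩ G.neighborFinset p.2).card) +
           (∑ p ∈ (univ : Finset V).offDiag,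
              (Gᶜ.neighborFinset p.1 ∩ Gᶜ.neighborFinset p.2).card)) := by
  classical
  rw [sum_common_eq G, sum_common_eq Gᶜ, ← Finset.sum_add_distrib, Finset.mul_sum]
  calc Fintype.card V * ((Fintype.card V - 1) * (Fintype.card V - 3))
      = ∑ _z : V, (Fintype.card V - 1) * (Fintype.card V - 3) := by
        rw [Finset.sum_const, card_univ, smul_eq_mul]
    _ ≤ ∑ z : V, 2 * ((G.neighborFinset z).offDiag.card +
          (Gᶜ.neighborFinset z).offDiag.card) :=
        Finset.sum_le_sum fun z _ => key_z G hn z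

/-- The basic counting bound: `n - 1 ≤ 2 (k + k')`. -/
lemma base_count (hc : G.IsRVDColoring c) (hc' : Gᶜ.IsRVDColoring c')
    (hn : 3 ≤ Fintype.card V) :
    Fintype.card V - 1 ≤ 2 * (k + k') := by
  set n := Fintype.card V with hndef
  -- lower bound on the double sum
  have hlow : n * ((n - 1) * (n - 3)) ≤
      2 * ((∑ p ∈ (univ : Finset V).offDiag,
              (G.neighborFinset p.1 ∩ G.neighborFinset p.2).card) +
           (∑ p ∈ (univ : Finset V).offDiag,
              (Gᶜ.neighborFinset p.1 ∩ Gᶜ.neighborFinset p.2).card)) := count_low G hn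
  -- upper bound on the double sum
  have hup : (∑ p ∈ (univ : Finset V).offDiag,
        (G.neighborFinset p.1 ∩ G.neighborFinset p.2).card) +
      (∑ p ∈ (univ : Finset V).offDiag,
        (Gᶜ.neighborFinset p.1 ∩ Gᶜ.neighborFinset p.2).card) +
      (univ : Finset V).offDiag.card ≤ (univ : Finset V).offDiag.card * (k + k') := by
    have e : (∑ p ∈ (univ : Finset V).offDiag,
          (G.neighborFinset p.1 ∩ G.neighborFinset p.2).card) +
        (∑ p ∈ (univ : Finset V).offDiag,
          (Gᶜ.neighborFinset p.1 ∩ Gᶜ.neighborFinset p.2).card) +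
        (univ : Finset V).offDiag.card = ∑ p ∈ (univ : Finset V).offDiag,
          ((G.neighborFinset p.1 ∩ G.neighborFinset p.2).card +
           (Gᶜ.neighborFinset p.1 ∩ Gᶜ.neighborFinset p.2).card + 1) := by
      rw [Finset.sum_add_distrib, Finset.sum_add_distrib, Finset.sum_const, smul_eq_mul, mul_one]
    rw [e]
    calc ∑ p ∈ (univ : Finset V).offDiag,
          ((G.neighborFinset p.1 ∩ G.neighborFinset p.2).card +
           (Gᶜ.neighborFinset p.1 ∩ Gᶜ.neighborFinset p.2).card + 1)
        ≤ ∑ _p ∈ (univ : Finset V).offDiag, (k + k') := by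
          refine Finset.sum_le_sum fun p hp => ?_
          exact pair_bound hc hc' (Finset.mem_offDiag.1 hp).2.2
      _ = (univ : Finset V).offDiag.card * (k + k') := by
          rw [Finset.sum_const, smul_eq_mul]
  -- combine
  obtain ⟨m, hm⟩ : ∃ m, n = m + 3 := ⟨n - 3, by omega⟩
  set T := (∑ p ∈ (univ : Finset V).offDiag,
        (G.neighborFinset p.1 ∩ G.neighborFinset p.2).card) +
      (∑ p ∈ (univ : Finset V).offDiag,
        (Gᶜ.neighborFinset p.1 ∩ Gᶜ.neighborFinset p.2).card) with hT
  have hC : (univ : Finset V).offDiag.card = (m + 3) * (m + 2) := by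
    rw [Finset.offDiag_card, card_univ, ← hndef, hm]
    exact Nat.sub_eq_of_eq_add (by ring)
  have hlow' : (m + 3) * ((m + 2) * m) ≤ 2 * T := by
    have e1 : (n - 1) = m + 2 := by omega
    have e2 : (n - 3) = m := by omega
    rw [e1, e2, hm] at hlow
    exact hlow
  have hup' : T + (m + 3) * (m + 2) ≤ (m + 3) * (m + 2) * (k + k') := by
    rw [hC] at hup
    exact hup
  have hgoal : m + 2 ≤ 2 * (k + k') := by
    by_contra hcon
    push_neg at hcon
    have h2 : (m + 3) * (m + 2) * (2 * (k + k')) ≤ (m + 3) * (m + 2) * (m + 1) :=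
      Nat.mul_le_mul_left _ (by omega)
    nlinarith [hlow', hup', h2]
  omega

end Counting

section Main

variable {V : Type*} [Fintype V] [DecidableEq V] {k k' : ℕ}

/-- If `n ≥ 2k + 4` then among the fibers of `c : V → Fin k` one can find two
disjoint monochromatic triples. -/
lemma exists_two_triples (c : V → Fin k) (h : 2 * k + 4 ≤ Fintype.card V) :
    ∃ τ₁ τ₂ : Finset V, τ₁.card = 3 ∧ τ₂.card = 3 ∧ Disjoint τ₁ τ₂ ∧
      (∀ x ∈ τ₁, ∀ y ∈ τ₁, c x = c y) ∧ (∀ x ∈ τ₂, ∀ y ∈ τ₂, c x = c y) := by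
  classical
  set F : Fin k → Finset V := fun i => univ.filter (fun v => c v = i) with hF
  have hmono : ∀ i, ∀ x ∈ F i, ∀ y ∈ F i, c x = c y := by
    intro i x hx y hy
    simp only [hF, mem_filter] at hx hy
    rw [hx.2, hy.2]
  by_cases hbig : ∃ i, 6 ≤ (F i).card
  · obtain ⟨i, hi⟩ := hbig
    obtain ⟨t, hts, htc⟩ := Finset.exists_subset_card_eq hi
    obtain ⟨τ₁, hτ₁s, hτ₁c⟩ := Finset.exists_subset_card_eq (n := 3) (by omega : 3 ≤ t.card)
    refine ⟨τ₁, t \ τ₁, hτ₁c, ?_, Finset.disjoint_sdiff, ?_, ?_⟩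
    · rw [Finset.card_sdiff_of_subset hτ₁s, htc, hτ₁c]
    · intro x hx y hy
      exact hmono i x (hts (hτ₁s hx)) y (hts (hτ₁s hy))
    · intro x hx y hy
      exact hmono i x (hts (Finset.mem_sdiff.1 hx).1) y (hts (Finset.mem_sdiff.1 hy).1)
  by_cases htwo : ∃ i j : Fin k, i ≠ j ∧ 3 ≤ (F i).card ∧ 3 ≤ (F j).card
  · obtain ⟨i, j, hij, hi, hj⟩ := htwo
    obtain ⟨τ₁, hτ₁s, hτ₁c⟩ := Finset.exists_subset_card_eq hi
    obtain ⟨τ₂, hτ₂s, hτ₂c⟩ := Finset.exists_subset_card_eq hj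
    refine ⟨τ₁, τ₂, hτ₁c, hτ₂c, ?_, ?_, ?_⟩
    · rw [Finset.disjoint_left]
      intro a ha hb
      have h1 := hτ₁s ha
      have h2 := hτ₂s hb
      simp only [hF, mem_filter] at h1 h2
      exact hij (h1.2 ▸ h2.2 ▸ rfl)
    · intro x hx y hy; exact hmono i x (hτ₁s hx) y (hτ₁s hy)
    · intro x hx y hy; exact hmono j x (hτ₂s hx) y (hτ₂s hy)
  -- otherwise the fibers are too small to cover V
  · exfalso
    push_neg at hbig htwo
    have hcover : Fintype.card V = ∑ i : Fin k, (F i).card := by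
      rw [← Finset.card_univ]
      exact Finset.card_eq_sum_card_fiberwise (fun x _ => Finset.mem_univ (c x))
    by_cases hthree : ∃ i, 3 ≤ (F i).card
    · obtain ⟨i₀, hi₀⟩ := hthree
      have hsum : ∑ i : Fin k, (F i).card =
          (F i₀).card + ∑ i ∈ univ.erase i₀, (F i).card :=
        (Finset.add_sum_erase univ (fun i => (F i).card) (mem_univ i₀)).symm
      have hrest : ∑ i ∈ univ.erase i₀, (F i).card ≤ ∑ _i ∈ univ.erase i₀, 2 := by
        refine Finset.sum_le_sum fun i hi => ?_
        by_contra hcon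
        push_neg at hcon
        have := htwo i i₀ (Finset.mem_erase.1 hi).1 (by omega)
        omega
      have h5 : (F i₀).card ≤ 5 := by
        have := hbig i₀; omega
      have hcard : (univ.erase i₀).card = k - 1 := by
        rw [Finset.card_erase_of_mem (mem_univ i₀), Finset.card_univ, Fintype.card_fin]
      rw [Finset.sum_const, smul_eq_mul, hcard] at hrest
      have hk1 : 1 ≤ k := i₀.pos
      omega
    · push_neg at hthree
      have : ∑ i : Fin k, (F i).card ≤ ∑ _i : Fin k, 2 :=
        Finset.sum_le_sum fun i _ => by have := hthree i; omega
      rw [Finset.sum_const, Finset.card_univ, Fintype.card_fin, smul_eq_mul] at this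
      omega

/-- The set of vertices adjacent to at least `2` members of a monochromatic triple
has at most `3` elements. -/
lemma U_bound {G : SimpleGraph V} [DecidableRel G.Adj] {c : V → Fin k}
    (hc : G.IsRVDColoring c) {τ : Finset V} (ht : τ.card = 3)
    (hm : ∀ x ∈ τ, ∀ y ∈ τ, c x = c y) :
    (univ.filter (fun w => 2 ≤ (G.neighborFinset w ∩ τ).card)).card ≤ 3 := by
  obtain ⟨x, y, z, hxy, hxz, hyz, rfl⟩ := Finset.card_eq_three.1 ht
  have hsub : univ.filter (fun w => 2 ≤ (G.neighborFinset w ∩ ({x, y, z} : Finset V)).card) ⊆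
      (G.neighborFinset x ∩ G.neighborFinset y) ∪
      (G.neighborFinset x ∩ G.neighborFinset z) ∪
      (G.neighborFinset y ∩ G.neighborFinset z) := by
    intro w hw
    rw [Finset.mem_filter] at hw
    obtain ⟨p, hp, q, hq, hpq⟩ := Finset.one_lt_card.1 (by omega : 1 < (G.neighborFinset w ∩ ({x, y, z} : Finset V)).card)
    rw [Finset.mem_inter, SimpleGraph.mem_neighborFinset] at hp hq
    have hpm := hp.2
    have hqm := hq.2
    have hpw : G.Adj p w := hp.1.symm
    have hqw : G.Adj q w := hq.1.symm
    simp only [Finset.mem_insert, Finset.mem_singleton] at hpm hqm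
    simp only [Finset.mem_union, Finset.mem_inter, SimpleGraph.mem_neighborFinset]
    rcases hpm with rfl | rfl | rfl <;> rcases hqm with rfl | rfl | rfl <;>
      first
        | exact absurd rfl hpq
        | tauto
  calc (univ.filter (fun w => 2 ≤ (G.neighborFinset w ∩ ({x, y, z} : Finset V)).card)).card
      ≤ ((G.neighborFinset x ∩ G.neighborFinset y) ∪
         (G.neighborFinset x ∩ G.neighborFinset z) ∪
         (G.neighborFinset y ∩ G.neighborFinset z)).card := Finset.card_le_card hsub
    _ ≤ ((G.neighborFinset x ∩ G.neighborFinset y) ∪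
         (G.neighborFinset x ∩ G.neighborFinset z)).card +
        (G.neighborFinset y ∩ G.neighborFinset z).card := Finset.card_union_le _ _
    _ ≤ (G.neighborFinset x ∩ G.neighborFinset y).card +
        (G.neighborFinset x ∩ G.neighborFinset z).card +
        (G.neighborFinset y ∩ G.neighborFinset z).card := by
          have := Finset.card_union_le (G.neighborFinset x ∩ G.neighborFinset y)
            (G.neighborFinset x ∩ G.neighborFinset z)
          omega
    _ ≤ 1 + 1 + 1 := by
        have b1 := mono_common_card_le hc hxy (hm x (by simp) y (by simp))
        have b2 := mono_common_card_le hc hxz (hm x (by simp) z (by simp))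
        have b3 := mono_common_card_le hc hyz (hm y (by simp) z (by simp))
        omega
    _ = 3 := rfl

/-- If the coloring `c` of `G` possesses two disjoint monochromatic triples, then
(together with all the counting facts) we reach a contradiction, assuming
`k + k' + 8 ≤ n`. -/
lemma Pcase {G : SimpleGraph V} [DecidableRel G.Adj] [DecidableRel Gᶜ.Adj]
    {c : V → Fin k} {c' : V → Fin k'}
    (hc : G.IsRVDColoring c) (hc' : Gᶜ.IsRVDColoring c')
    {τ₁ τ₂ : Finset V} (ht₁ : τ₁.card = 3) (ht₂ : τ₂.card = 3) (hdisj : Disjoint τ₁ τ₂)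
    (hm₁ : ∀ x ∈ τ₁, ∀ y ∈ τ₁, c x = c y) (hm₂ : ∀ x ∈ τ₂, ∀ y ∈ τ₂, c x = c y)
    (hK : k + k' + 8 ≤ Fintype.card V) : False := by
  classical
  set n := Fintype.card V with hndef
  set U₁ := univ.filter (fun w => 2 ≤ (G.neighborFinset w ∩ τ₁).card) with hU₁def
  set U₂ := univ.filter (fun w => 2 ≤ (G.neighborFinset w ∩ τ₂).card) with hU₂def
  set Bad := τ₁ ∪ τ₂ ∪ U₁ ∪ U₂ with hBaddef
  have hBad : Bad.card ≤ 12 := by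
    have u1 := U_bound hc ht₁ hm₁
    have u2 := U_bound hc ht₂ hm₂
    have e1 := Finset.card_union_le (τ₁ ∪ τ₂ ∪ U₁) U₂
    have e2 := Finset.card_union_le (τ₁ ∪ τ₂) U₁
    have e3 := Finset.card_union_le τ₁ τ₂
    rw [← hU₁def] at u1
    rw [← hU₂def] at u2
    rw [hBaddef]
    omega
  -- every pair with the same `c'`-color meets `Bad`
  have hmeet : ∀ a b : V, a ≠ b → c' a = c' b → a ∈ Bad ∨ b ∈ Bad := by
    intro a b hab hcc
    by_contra hcon
    push_neg at hcon
    obtain ⟨ha, hb⟩ := hcon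
    simp only [hBaddef, Finset.mem_union, not_or] at ha hb
    obtain ⟨⟨⟨haτ₁, haτ₂⟩, haU₁⟩, haU₂⟩ := ha
    obtain ⟨⟨⟨hbτ₁, hbτ₂⟩, hbU₁⟩, hbU₂⟩ := hb
    have key : ∀ τ : Finset V, τ.card = 3 →
        ¬ (2 ≤ (G.neighborFinset a ∩ τ).card) →
        ¬ (2 ≤ (G.neighborFinset b ∩ τ).card) →
        ∃ m ∈ τ, ¬ G.Adj a m ∧ ¬ G.Adj b m := by
      intro τ hτ ha2 hb2
      have hsplit : (τ ∩ (G.neighborFinset a ∪ G.neighborFinset b)).card +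
          (τ \ (G.neighborFinset a ∪ G.neighborFinset b)).card = τ.card :=
        Finset.card_inter_add_card_sdiff τ _
      have hc2 : (τ ∩ (G.neighborFinset a ∪ G.neighborFinset b)).card ≤ 2 := by
        have : τ ∩ (G.neighborFinset a ∪ G.neighborFinset b) =
            (τ ∩ G.neighborFinset a) ∪ (τ ∩ G.neighborFinset b) :=
          Finset.inter_union_distrib_left τ _ _
        rw [this]
        have h1 := Finset.card_union_le (τ ∩ G.neighborFinset a) (τ ∩ G.neighborFinset b)
        have c1 : (τ ∩ G.neighborFinset a).card = (G.neighborFinset a ∩ τ).card := by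
          rw [Finset.inter_comm]
        have c2 : (τ ∩ G.neighborFinset b).card = (G.neighborFinset b ∩ τ).card := by
          rw [Finset.inter_comm]
        omega
      have hpos : 0 < (τ \ (G.neighborFinset a ∪ G.neighborFinset b)).card := by omega
      obtain ⟨m, hm⟩ := Finset.card_pos.1 hpos
      rw [Finset.mem_sdiff, Finset.mem_union, not_or] at hm
      refine ⟨m, hm.1, ?_, ?_⟩
      · intro hadj; exact hm.2.1 ((SimpleGraph.mem_neighborFinset _ _ _).2 hadj)
      · intro hadj; exact hm.2.2 ((SimpleGraph.mem_neighborFinset _ _ _).2 hadj)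
    obtain ⟨m₁, hm₁mem, hm₁a, hm₁b⟩ := key τ₁ ht₁
      (by simpa [hU₁def] using haU₁) (by simpa [hU₁def] using hbU₁)
    obtain ⟨m₂, hm₂mem, hm₂a, hm₂b⟩ := key τ₂ ht₂
      (by simpa [hU₂def] using haU₂) (by simpa [hU₂def] using hbU₂)
    have hm12 : m₁ ≠ m₂ := by
      intro h
      exact (Finset.disjoint_left.1 hdisj hm₁mem) (h ▸ hm₂mem)
    have e1 : m₁ ∈ Gᶜ.neighborFinset a ∩ Gᶜ.neighborFinset b := by
      rw [Finset.mem_inter, SimpleGraph.mem_neighborFinset, SimpleGraph.mem_neighborFinset]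
      exact ⟨⟨fun h => haτ₁ (h ▸ hm₁mem), hm₁a⟩, ⟨fun h => hbτ₁ (h ▸ hm₁mem), hm₁b⟩⟩
    have e2 : m₂ ∈ Gᶜ.neighborFinset a ∩ Gᶜ.neighborFinset b := by
      rw [Finset.mem_inter, SimpleGraph.mem_neighborFinset, SimpleGraph.mem_neighborFinset]
      exact ⟨⟨fun h => haτ₂ (h ▸ hm₂mem), hm₂a⟩, ⟨fun h => hbτ₂ (h ▸ hm₂mem), hm₂b⟩⟩
    have h2 : 1 < (Gᶜ.neighborFinset a ∩ Gᶜ.neighborFinset b).card :=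
      Finset.one_lt_card.2 ⟨m₁, e1, m₂, e2, hm12⟩
    have := mono_common_card_le hc' hab hcc
    omega
  -- hence `n ≤ 12 + k'`
  have hn1 : n ≤ 12 + k' := by
    have hinj1 : Set.InjOn c' ↑(univ \ Bad) := by
      intro a ha b hb hcc
      by_contra hab
      rcases hmeet a b hab hcc with h | h
      · rw [Finset.coe_sdiff, Set.mem_diff] at ha; exact ha.2 h
      · rw [Finset.coe_sdiff, Set.mem_diff] at hb; exact hb.2 h
    have h1 : (univ \ Bad).card ≤ k' := card_le_of_injOn subset_rfl hinj1
    have h2 : (univ \ Bad).card = n - Bad.card := by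
      rw [Finset.card_sdiff_of_subset (Finset.subset_univ Bad), Finset.card_univ]
    have h3 : Bad.card ≤ n := le_trans (Finset.card_le_univ Bad) (le_of_eq Finset.card_univ)
    omega
  have hk4 : k ≤ 4 := by omega
  -- high-degree vertices
  set H := univ.filter (fun z => n ≤ 2 * G.degree z + 3) with hHdef
  have hn2 : n ≤ H.card + k' := by
    have hinj2 : Set.InjOn c' ↑(univ \ H) := by
      intro a ha b hb hcc
      by_contra hab
      rw [Finset.coe_sdiff, Set.mem_diff, Finset.mem_coe, Finset.mem_coe] at ha hb
      have hla : ¬ (n ≤ 2 * G.degree a + 3) := by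
        intro h; exact ha.2 (Finset.mem_filter.2 ⟨Finset.mem_univ a, h⟩)
      have hlb : ¬ (n ≤ 2 * G.degree b + 3) := by
        intro h; exact hb.2 (Finset.mem_filter.2 ⟨Finset.mem_univ b, h⟩)
      have hda : Gᶜ.degree a = n - 1 - G.degree a := G.degree_compl a
      have hdb : Gᶜ.degree b = n - 1 - G.degree b := G.degree_compl b
      have hlta : G.degree a < n := G.degree_lt_card_verts a
      have hltb : G.degree b < n := G.degree_lt_card_verts b
      have hsum := Finset.card_union_add_card_inter (Gᶜ.neighborFinset a) (Gᶜ.neighborFinset b)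
      have hle : (Gᶜ.neighborFinset a ∪ Gᶜ.neighborFinset b).card ≤ n :=
        le_trans (Finset.card_le_univ _) (le_of_eq Finset.card_univ)
      have hca : (Gᶜ.neighborFinset a).card = Gᶜ.degree a := rfl
      have hcb : (Gᶜ.neighborFinset b).card = Gᶜ.degree b := rfl
      have := mono_common_card_le hc' hab hcc
      omega
    have h1 : (univ \ H).card ≤ k' := card_le_of_injOn subset_rfl hinj2
    have h2 : (univ \ H).card = n - H.card := by
      rw [Finset.card_sdiff_of_subset (Finset.subset_univ H), Finset.card_univ]
    have h3 : H.card ≤ n := le_trans (Finset.card_le_univ H) (le_of_eq Finset.card_univ)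
    omega
  have hHge : k + 8 ≤ H.card := by omega
  -- pigeonhole: three high vertices of the same color
  obtain ⟨i, -, hi⟩ := Finset.exists_lt_card_fiber_of_mul_lt_card_of_maps_to
    (f := c) (t := (univ : Finset (Fin k))) (fun a _ => Finset.mem_univ (c a))
    (by rw [Finset.card_univ, Fintype.card_fin]; omega : (univ : Finset (Fin k)).card * 2 < H.card)
  rw [Finset.two_lt_card] at hi
  obtain ⟨u, hu, v, hv, w, hw, huv, huw, hvw⟩ := hi
  rw [Finset.mem_filter] at hu hv hw
  have hcu : c u = c v := by rw [hu.2, hv.2]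
  have hcu2 : c u = c w := by rw [hu.2, hw.2]
  have hcv : c v = c w := by rw [hv.2, hw.2]
  have hdu : n ≤ 2 * G.degree u + 3 := (Finset.mem_filter.1 hu.1).2
  have hdv : n ≤ 2 * G.degree v + 3 := (Finset.mem_filter.1 hv.1).2
  have hdw : n ≤ 2 * G.degree w + 3 := (Finset.mem_filter.1 hw.1).2
  have cuv := mono_common_card_le hc huv hcu
  have cuw := mono_common_card_le hc huw hcu2
  have cvw := mono_common_card_le hc hvw hcv
  -- union bound gives n ≤ 15
  have hn15 : n ≤ 15 := by
    set A := G.neighborFinset u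
    set B := G.neighborFinset v
    set C := G.neighborFinset w
    have h1 := Finset.card_union_add_card_inter A B
    have h2 := Finset.card_union_add_card_inter (A ∪ B) C
    have h3 : ((A ∪ B) ∩ C).card ≤ (A ∩ C).card + (B ∩ C).card := by
      rw [Finset.union_inter_distrib_right]
      exact Finset.card_union_le _ _
    have h4 : (A ∪ B ∪ C).card ≤ n :=
      le_trans (Finset.card_le_univ _) (le_of_eq Finset.card_univ)
    have e1 : A.card = G.degree u := rfl
    have e2 : B.card = G.degree v := rfl
    have e3 : C.card = G.degree w := rfl
    omega
  -- base count pins everything down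
  have hbase := base_count hc hc' (by omega : 3 ≤ Fintype.card V)
  rw [← hndef] at hbase
  have hn15' : n = 15 := by omega
  have hKeq : k + k' = 7 := by omega
  -- a monochromatic pair for c'
  have hk'lt : Fintype.card (Fin k') < Fintype.card V := by
    rw [Fintype.card_fin, ← hndef]; omega
  obtain ⟨u₀, v₀, hne₀, hcc₀⟩ := Fintype.exists_ne_map_eq_of_card_lt c' hk'lt
  -- sharpened count
  set D := (univ : Finset V).offDiag with hDdef
  set f : V × V → ℕ := fun p => (G.neighborFinset p.1 ∩ G.neighborFinset p.2).card +
      (Gᶜ.neighborFinset p.1 ∩ Gᶜ.neighborFinset p.2).card with hfdef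
  have hDlow : n * ((n - 1) * (n - 3)) ≤ 2 * ∑ p ∈ D, f p := by
    have := count_low G (by omega : 3 ≤ Fintype.card V)
    rw [← hndef] at this
    rw [hfdef, Finset.sum_add_distrib]
    exact this
  have hS2 : ({(u₀, v₀), (v₀, u₀)} : Finset (V × V)) ⊆ D := by
    intro p hp
    rw [Finset.mem_insert, Finset.mem_singleton] at hp
    rcases hp with rfl | rfl
    · exact Finset.mem_offDiag.2 ⟨Finset.mem_univ _, Finset.mem_univ _, hne₀⟩
    · exact Finset.mem_offDiag.2 ⟨Finset.mem_univ _, Finset.mem_univ _, hne₀.symm⟩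
  have hpairne : ((u₀, v₀) : V × V) ≠ (v₀, u₀) := by
    intro h
    exact hne₀ (congrArg Prod.fst h)
  have hS2card : ({(u₀, v₀), (v₀, u₀)} : Finset (V × V)).card = 2 := by
    rw [Finset.card_insert_of_notMem (by simp [hpairne]), Finset.card_singleton]
  have hsplit : ∑ p ∈ D \ {(u₀, v₀), (v₀, u₀)}, f p +
      ∑ p ∈ ({(u₀, v₀), (v₀, u₀)} : Finset (V × V)), f p = ∑ p ∈ D, f p :=
    Finset.sum_sdiff hS2
  have hS2sum : ∑ p ∈ ({(u₀, v₀), (v₀, u₀)} : Finset (V × V)), f p ≤ 2 * (k + 1) := by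
    rw [Finset.sum_pair hpairne]
    have b1 := common_card_le hc hne₀
    have b2 := common_card_le hc hne₀.symm
    have b3 := mono_common_card_le hc' hne₀ hcc₀
    have b4 := mono_common_card_le hc' hne₀.symm hcc₀.symm
    simp only [hfdef]
    omega
  have hrest : ∑ p ∈ D \ {(u₀, v₀), (v₀, u₀)}, f p ≤ (D.card - 2) * 6 := by
    calc ∑ p ∈ D \ {(u₀, v₀), (v₀, u₀)}, f p
        ≤ ∑ _p ∈ D \ {(u₀, v₀), (v₀, u₀)}, 6 := by
          refine Finset.sum_le_sum fun p hp => ?_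
          have hpD : p ∈ D := (Finset.mem_sdiff.1 hp).1
          have := pair_bound hc hc' (Finset.mem_offDiag.1 hpD).2.2
          simp only [hfdef]
          omega
      _ = (D \ {(u₀, v₀), (v₀, u₀)} : Finset (V × V)).card * 6 := by
          rw [Finset.sum_const, smul_eq_mul]
      _ = (D.card - 2) * 6 := by rw [Finset.card_sdiff_of_subset hS2, hS2card]
  have hDcard : D.card = 210 := by
    rw [hDdef, Finset.offDiag_card, Finset.card_univ, ← hndef, hn15']
  have hDlow' : 2520 ≤ 2 * ∑ p ∈ D, f p := by
    rw [hn15'] at hDlow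
    norm_num at hDlow
    exact hDlow
  omega

lemma main_contra {G : SimpleGraph V} [DecidableRel G.Adj] [DecidableRel Gᶜ.Adj]
    {c : V → Fin k} {c' : V → Fin k'}
    (hc : G.IsRVDColoring c) (hc' : Gᶜ.IsRVDColoring c') (hK : k + k' + 8 ≤ Fintype.card V) : False := by
  classical
  by_cases hP : 2 * k + 4 ≤ Fintype.card V
  · obtain ⟨τ₁, τ₂, ht₁, ht₂, hdisj, hm₁, hm₂⟩ := exists_two_triples c hP
    exact Pcase hc hc' ht₁ ht₂ hdisj hm₁ hm₂ hK
  · by_cases hP' : 2 * k' + 4 ≤ Fintype.card V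
    · obtain ⟨τ₁, τ₂, ht₁, ht₂, hdisj, hm₁, hm₂⟩ := exists_two_triples c' hP'
      have hc2 : Gᶜᶜ.IsRVDColoring c := by rw [compl_compl]; exact hc
      exact Pcase (G := Gᶜ) hc' hc2 ht₁ ht₂ hdisj hm₁ hm₂ (by omega)
    · omega

end Main

/-- For connected graphs `G` of order `n ≥ 4` whose complement is also
connected, `n - 7 ≤ rvd(G) + rvd(Ḡ) ≤ 2n`. -/
theorem rvd_add_rvd_compl {V : Type*} [Fintype V] (G : SimpleGraph V)
    (hG : G.Connected) (hGc : Gᶜ.Connected) (hn : 4 ≤ Fintype.card V) :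
    (Fintype.card V : ℤ) - 7 ≤ (G.rvd : ℤ) + Gᶜ.rvd ∧
      (G.rvd : ℤ) + Gᶜ.rvd ≤ 2 * Fintype.card V := by
  classical
  have hub1 := rvd_le_card G
  have hub2 := rvd_le_card Gᶜ
  obtain ⟨c, hc⟩ := rvd_mem G
  obtain ⟨c', hc'⟩ := rvd_mem Gᶜ
  constructor
  · by_contra hcon
    push_neg at hcon
    have hK : G.rvd + Gᶜ.rvd + 8 ≤ Fintype.card V := by omega
    exact main_contra hc hc' hK
  · push_cast
    omega
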